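/- arXiv:2104.00003 — 3 statements merged into one kernel-verified Lean document; each statement's English description precedes it below -/
import Mathlib

section
/- Let C be a real-valued function on d×d complex matrices that is bounded on the set D of density matrices and convex, i.e. C(tρ + (1−t)σ) ≤ t·C(ρ) + (1−t)·C(σ) for all t ∈ [0,1] and density matrices ρ, σ. Then for all quantum channels Θ₁, Θ₂, Λ and all t ∈ [0,1], the power function satisfies P_C(t·Θ₁ + (1−t)·Θ₂; Λ) ≤ t·P_C(Θ₁; Λ) + (1−t)·P_C(Θ₂; Λ). -/
open Matrix ComplexOrder

/-- A density matrix: positive semidefinite with trace 1. -/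
def IsDensity (d : ℕ) (ρ : Matrix (Fin d) (Fin d) ℂ) : Prop :=
  ρ.PosSemidef ∧ ρ.trace = 1

/-- A quantum channel: a map admitting a Kraus decomposition. -/
def IsChannel (d : ℕ) (Λ : Matrix (Fin d) (Fin d) ℂ → Matrix (Fin d) (Fin d) ℂ) : Prop :=
  ∃ (m : ℕ) (K : Fin m → Matrix (Fin d) (Fin d) ℂ),
    (∀ ρ, Λ ρ = ∑ i, K i * ρ * (K i)ᴴ) ∧ (∑ i, (K i)ᴴ * K i) = 1

/-- A channel is an incoherent operation induced by the coherence measure `C` (CMIO for `C`)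
if it does not increase `C` on any density matrix. -/
def IsCMIO (d : ℕ) (C : Matrix (Fin d) (Fin d) ℂ → ℝ)
    (Λ : Matrix (Fin d) (Fin d) ℂ → Matrix (Fin d) (Fin d) ℂ) : Prop :=
  ∀ ρ, IsDensity d ρ → C (Λ ρ) ≤ C ρ

/-- `C` is bounded on the set of density matrices. -/
def BoundedOnD (d : ℕ) (C : Matrix (Fin d) (Fin d) ℂ → ℝ) : Prop :=
  ∃ M : ℝ, ∀ ρ, IsDensity d ρ → |C ρ| ≤ M

/-- `C` is convex on density matrices. -/
def ConvexOnD (d : ℕ) (C : Matrix (Fin d) (Fin d) ℂ → ℝ) : Prop :=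
  ∀ t : ℝ, t ∈ Set.Icc (0 : ℝ) 1 → ∀ ρ σ : Matrix (Fin d) (Fin d) ℂ,
    IsDensity d ρ → IsDensity d σ →
    C (t • ρ + (1 - t) • σ) ≤ t * C ρ + (1 - t) * C σ

/-- The power of the channel `Θ` over the channel `Λ`:
`P_C(Θ; Λ) = sup_{ρ ∈ D} (C(Θ(ρ)) − C(Λ(ρ)))`. -/
noncomputable def power (d : ℕ) (C : Matrix (Fin d) (Fin d) ℂ → ℝ)
    (Θ Λ : Matrix (Fin d) (Fin d) ℂ → Matrix (Fin d) (Fin d) ℂ) : ℝ :=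
  sSup ((fun ρ => C (Θ ρ) - C (Λ ρ)) '' {ρ | IsDensity d ρ})

/-- The dynamical coherence measure `𝔠_C(Θ) = inf_{Λ channel, CMIO for C} |P_C(Θ; Λ)|`. -/
noncomputable def dynCoh (d : ℕ) (C : Matrix (Fin d) (Fin d) ℂ → ℝ)
    (Θ : Matrix (Fin d) (Fin d) ℂ → Matrix (Fin d) (Fin d) ℂ) : ℝ :=
  sInf ((fun Λ => |power d C Θ Λ|) '' {Λ | IsChannel d Λ ∧ IsCMIO d C Λ})


lemma psd_add {n : ℕ} {A B : Matrix (Fin n) (Fin n) ℂ} (hA : A.PosSemidef) (hB : B.PosSemidef) :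
    (A + B).PosSemidef :=
  hA.add hB

lemma psd_zero {n : ℕ} : (0 : Matrix (Fin n) (Fin n) ℂ).PosSemidef :=
  ⟨isHermitian_zero, fun x => by simp⟩

lemma channel_density {d : ℕ} {Λ : Matrix (Fin d) (Fin d) ℂ → Matrix (Fin d) (Fin d) ℂ}
    (hΛ : IsChannel d Λ) {ρ : Matrix (Fin d) (Fin d) ℂ} (hρ : IsDensity d ρ) :
    IsDensity d (Λ ρ) := by
  obtain ⟨m, K, hK, hsum⟩ := hΛ
  rw [hK]
  constructor
  · exact Finset.sum_induction _ _ (fun a b ha hb => psd_add ha hb) psd_zero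
      (fun i _ => hρ.1.mul_mul_conjTranspose_same (K i))
  · calc (∑ i, K i * ρ * (K i)ᴴ).trace = ∑ i, ((K i)ᴴ * K i * ρ).trace := by
          rw [trace_sum]; exact Finset.sum_congr rfl fun i _ => trace_mul_cycle _ _ _
      _ = ((∑ i, (K i)ᴴ * K i) * ρ).trace := by rw [Finset.sum_mul, trace_sum]
      _ = 1 := by rw [hsum, one_mul, hρ.2]

lemma power_bddAbove {d : ℕ} {C : Matrix (Fin d) (Fin d) ℂ → ℝ} (hb : BoundedOnD d C)
    {Θ Λ : Matrix (Fin d) (Fin d) ℂ → Matrix (Fin d) (Fin d) ℂ}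
    (hΘ : IsChannel d Θ) (hΛ : IsChannel d Λ) :
    BddAbove ((fun ρ => C (Θ ρ) - C (Λ ρ)) '' {ρ | IsDensity d ρ}) := by
  obtain ⟨M, hM⟩ := hb
  refine ⟨2 * M, ?_⟩
  rintro x ⟨ρ, hρ, rfl⟩
  have h1 := hM _ (channel_density hΘ hρ)
  have h2 := hM _ (channel_density hΛ hρ)
  have := abs_le.mp h1
  have := abs_le.mp h2
  simp only []
  linarith [(abs_le.mp h1).2, (abs_le.mp h2).1]

theorem stmt2 (d : ℕ) (C : Matrix (Fin d) (Fin d) ℂ → ℝ)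
    (hb : BoundedOnD d C) (hconv : ConvexOnD d C)
    (Θ₁ Θ₂ Λ : Matrix (Fin d) (Fin d) ℂ → Matrix (Fin d) (Fin d) ℂ)
    (hΘ₁ : IsChannel d Θ₁) (hΘ₂ : IsChannel d Θ₂) (hΛ : IsChannel d Λ)
    (t : ℝ) (ht : t ∈ Set.Icc (0 : ℝ) 1) :
    power d C (fun ρ => t • Θ₁ ρ + (1 - t) • Θ₂ ρ) Λ ≤
      t * power d C Θ₁ Λ + (1 - t) * power d C Θ₂ Λ := by
  obtain ⟨ht0, ht1⟩ := ht
  by_cases hD : {ρ | IsDensity d ρ}.Nonempty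
  · apply csSup_le (hD.image _)
    rintro x ⟨ρ, hρ, rfl⟩
    have hd1 : IsDensity d (Θ₁ ρ) := channel_density hΘ₁ hρ
    have hd2 : IsDensity d (Θ₂ ρ) := channel_density hΘ₂ hρ
    have hc := hconv t ⟨ht0, ht1⟩ _ _ hd1 hd2
    have hP1 : C (Θ₁ ρ) - C (Λ ρ) ≤ power d C Θ₁ Λ :=
      le_csSup (power_bddAbove hb hΘ₁ hΛ) ⟨ρ, hρ, rfl⟩
    have hP2 : C (Θ₂ ρ) - C (Λ ρ) ≤ power d C Θ₂ Λ :=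
      le_csSup (power_bddAbove hb hΘ₂ hΛ) ⟨ρ, hρ, rfl⟩
    have e1 : t * (C (Θ₁ ρ) - C (Λ ρ)) ≤ t * power d C Θ₁ Λ :=
      mul_le_mul_of_nonneg_left hP1 ht0
    have e2 : (1 - t) * (C (Θ₂ ρ) - C (Λ ρ)) ≤ (1 - t) * power d C Θ₂ Λ :=
      mul_le_mul_of_nonneg_left hP2 (by linarith)
    simp only []
    nlinarith [hc, e1, e2]
  · rw [Set.not_nonempty_iff_eq_empty] at hD
    simp [power, hD, Real.sSup_empty]
end

section
/- (Faithfulness of the dynamical coherence measure.) Let C be a real-valued function on d×d complex matrices that is bounded on the set D of density matrices. Then for every quantum channel Θ one has 𝔠_C(Θ) ≥ 0, and 𝔠_C(Θ) = 0 if and only if Θ is a CMIO for C. -/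
open Matrix ComplexOrder

lemma id_channel (d : ℕ) : IsChannel d (id : Matrix (Fin d) (Fin d) ℂ → _) := by
  refine ⟨1, fun _ => 1, fun ρ => ?_, ?_⟩ <;> simp

theorem stmt6 (d : ℕ) (C : Matrix (Fin d) (Fin d) ℂ → ℝ) (hb : BoundedOnD d C)
    (Θ : Matrix (Fin d) (Fin d) ℂ → Matrix (Fin d) (Fin d) ℂ) (hΘ : IsChannel d Θ) :
    0 ≤ dynCoh d C Θ ∧ (dynCoh d C Θ = 0 ↔ IsCMIO d C Θ) := by
  obtain ⟨M, hM⟩ := hb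
  have hnonneg : ∀ x ∈ ((fun Λ => |power d C Θ Λ|) '' {Λ | IsChannel d Λ ∧ IsCMIO d C Λ}), 0 ≤ x := by
    rintro x ⟨Λ, _, rfl⟩; exact abs_nonneg _
  have hbdd : BddBelow ((fun Λ => |power d C Θ Λ|) '' {Λ | IsChannel d Λ ∧ IsCMIO d C Λ}) :=
    ⟨0, fun x hx => hnonneg x hx⟩
  have h0 : (0 : ℝ) ≤ dynCoh d C Θ := Real.sInf_nonneg hnonneg
  refine ⟨h0, ?_, ?_⟩
  · -- dynCoh = 0 → CMIO
    intro hzero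
    by_contra hn
    simp only [IsCMIO, not_forall] at hn
    obtain ⟨ρ, hρ, hlt⟩ := hn
    push_neg at hlt
    set ε := C (Θ ρ) - C ρ with hε
    have hεpos : 0 < ε := by simp [hε]; linarith
    have hkey : ∀ x ∈ ((fun Λ => |power d C Θ Λ|) '' {Λ | IsChannel d Λ ∧ IsCMIO d C Λ}), ε ≤ x := by
      rintro x ⟨Λ, ⟨hΛc, hΛm⟩, rfl⟩
      have hub : BddAbove ((fun σ => C (Θ σ) - C (Λ σ)) '' {σ | IsDensity d σ}) := by
        refine ⟨M + M, ?_⟩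
        rintro y ⟨σ, hσ, rfl⟩
        have h1 := hM _ (channel_density hΘ hσ)
        have h2 := hM _ (channel_density hΛc hσ)
        have := abs_le.mp h1
        have := abs_le.mp h2
        dsimp only
        linarith [(abs_le.mp h1).2, (abs_le.mp h2).1]
      have hmem : C (Θ ρ) - C (Λ ρ) ∈ ((fun σ => C (Θ σ) - C (Λ σ)) '' {σ | IsDensity d σ}) :=
        ⟨ρ, hρ, rfl⟩
      have hle : ε ≤ power d C Θ Λ := by
        refine le_trans ?_ (le_csSup hub hmem)
        have := hΛm ρ hρ
        simp only [hε]; linarith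
      exact hle.trans (le_abs_self _)
    have : ε ≤ dynCoh d C Θ := by
      refine le_csInf ⟨_, ⟨id, ⟨id_channel d, fun σ _ => le_refl _⟩, rfl⟩⟩ hkey
    linarith [hzero ▸ this]
  · -- CMIO → dynCoh = 0
    intro hCM
    have hmem : |power d C Θ Θ| ∈ ((fun Λ => |power d C Θ Λ|) '' {Λ | IsChannel d Λ ∧ IsCMIO d C Λ}) :=
      ⟨Θ, ⟨hΘ, hCM⟩, rfl⟩
    have hpz : power d C Θ Θ = 0 := by
      unfold power
      have hsub : ((fun σ => C (Θ σ) - C (Θ σ)) '' {σ | IsDensity d σ}) ⊆ {0} := by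
        rintro y ⟨σ, _, rfl⟩; simp
      rcases Set.subset_singleton_iff_eq.mp hsub with h | h
      · rw [h, Real.sSup_empty]
      · rw [h, csSup_singleton]
    have : dynCoh d C Θ ≤ 0 := by
      have := csInf_le hbdd hmem
      rwa [hpz, abs_zero] at this
    linarith
end

section
/- For every unit vector ψ ∈ ℂ², the Shannon entropy of the POVM outcome distribution satisfies H[{p_k(|ψ⟩⟨ψ|)}] ≥ 3/2, with equality if and only if |ψ⟩⟨ψ| = |φ_m⟩⟨φ_m| for some m ∈ {0,1,2,3}. -/
set_option maxHeartbeats 4000000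


open Matrix ComplexOrder

/-- The POVM vectors `|φ_k⟩ = (|0⟩ + i^k |1⟩)/√2` for `k = 0,1,2,3`. -/
noncomputable def phiv (k : Fin 4) : Fin 2 → ℂ :=
  ![(1 : ℂ) / Real.sqrt 2, Complex.I ^ (k : ℕ) / Real.sqrt 2]

/-- The outer product `|ψ⟩⟨ψ|`. -/
def outer (ψ : Fin 2 → ℂ) : Matrix (Fin 2) (Fin 2) ℂ :=
  vecMulVec ψ (star ψ)

/-- The POVM outcome probabilities `p_k(ρ) = (1/2)⟨φ_k|ρ|φ_k⟩`. -/
noncomputable def pk (ρ : Matrix (Fin 2) (Fin 2) ℂ) (k : Fin 4) : ℝ :=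
  (star (phiv k) ⬝ᵥ ρ.mulVec (phiv k)).re / 2

/-- `-x log₂ x`, with the convention `0 log₂ 0 = 0`. -/
noncomputable def ent2 (x : ℝ) : ℝ := -(x * Real.logb 2 x)

/-- The Shannon entropy (base 2) of the POVM outcome distribution of `ρ`. -/
noncomputable def H4 (ρ : Matrix (Fin 2) (Fin 2) ℂ) : ℝ := ∑ k : Fin 4, ent2 (pk ρ k)

/-- The binary entropy `h(λ)` (base 2). -/
noncomputable def binEnt (l : ℝ) : ℝ := ent2 l + ent2 (1 - l)

/-- A qubit density matrix: positive semidefinite with trace 1. -/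
def IsDensity2 (ρ : Matrix (Fin 2) (Fin 2) ℂ) : Prop :=
  ρ.PosSemidef ∧ ρ.trace = 1

open Real Filter Topology

-- ent2 facts
lemma log2_pos : (0:ℝ) < Real.log 2 := Real.log_pos (by norm_num)

lemma ent2_half (u : ℝ) : ent2 (u/2) = ent2 u / 2 + u/2 := by
  rcases eq_or_ne u 0 with rfl | hu
  · simp [ent2]
  · simp only [ent2, Real.logb, Real.log_div hu (by norm_num : (2:ℝ) ≠ 0)]
    field_simp
    ring

lemma ent2_zero : ent2 0 = 0 := by simp [ent2]

lemma ent2_one_half : ent2 (1/2) = 1/2 := by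
  simp only [ent2, Real.logb, show (1:ℝ)/2 = 2⁻¹ by norm_num, Real.log_inv]
  field_simp

lemma ent2_one_quarter : ent2 (1/4) = 1/2 := by
  simp only [ent2, Real.logb, show (1:ℝ)/4 = 2⁻¹*2⁻¹ by norm_num, Real.log_inv,
    Real.log_mul (by norm_num : (2:ℝ)⁻¹ ≠ 0) (by norm_num : (2:ℝ)⁻¹ ≠ 0)]
  have := log2_pos
  field_simp
  ring

lemma pair_sum (s : ℝ) : ent2 ((1+s)/4) + ent2 ((1-s)/4) = 1/2 + binEnt ((1+s)/2) / 2 := by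
  have h1 : (1+s)/4 = ((1+s)/2)/2 := by ring
  have h2 : (1-s)/4 = ((1-s)/2)/2 := by ring
  rw [h1, h2, ent2_half ((1+s)/2), ent2_half ((1-s)/2), binEnt,
    show (1:ℝ) - (1+s)/2 = (1-s)/2 by ring]
  ring

noncomputable def Sf (t : ℝ) : ℝ := (1+t)*Real.log (1+t) + (1-t)*Real.log (1-t)

lemma Sf_hasSum {t : ℝ} (h : |t| < 1) :
    HasSum (fun k : ℕ => t^(2*k+2) / ((2*k+1)*(k+1))) (Sf t) := by
  have h1 := Real.hasSum_log_sub_log_of_abs_lt_one h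
  have ht2 : |t^2| < 1 := by
    rw [abs_pow]
    exact pow_lt_one₀ (abs_nonneg t) h (by norm_num)
  have h2 := Real.hasSum_pow_div_log_of_abs_lt_one ht2
  have h3 := (h1.mul_left t).add h2
  have hlog : Real.log (1 - t^2) = Real.log (1+t) + Real.log (1-t) := by
    rw [show (1:ℝ) - t^2 = (1+t)*(1-t) by ring, Real.log_mul]
    · nlinarith [abs_lt.mp h]
    · nlinarith [abs_lt.mp h]
  have hval : t * (Real.log (1+t) - Real.log (1-t)) + -(-Real.log (1-t^2)) = Sf t := by
    rw [hlog, Sf]; ring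
  have h4 : HasSum (fun k : ℕ => t * (2*(1/(2*(k:ℝ)+1))*t^(2*k+1)) - (t^2)^(k+1)/((k:ℝ)+1)) (Sf t) := by
    rw [← hval]
    exact (h1.mul_left t).sub h2
  convert h4 using 2 with k
  have hk1 : (2*(k:ℝ)+1) ≠ 0 := by positivity
  have hk2 : ((k:ℝ)+1) ≠ 0 := by positivity
  rw [← pow_mul]
  field_simp
  ring

lemma Sf_one : Sf 1 = 2 * Real.log 2 := by simp [Sf]; ring

lemma Sf_cont : Continuous Sf := by
  have : Sf = fun t => -(Real.negMulLog (1+t) + Real.negMulLog (1-t)) := by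
    funext t; simp [Sf, Real.negMulLog]; ring
  rw [this]
  fun_prop

lemma Sf_le {t : ℝ} (h : |t| ≤ 1) : Sf t ≤ 2 * Real.log 2 * t^2 := by
  rcases eq_or_lt_of_le h with h1 | h1
  · have : t = 1 ∨ t = -1 := by rcases abs_eq (by norm_num : (0:ℝ) ≤ 1) |>.mp h1 with h|h <;> simp [h]
    rcases this with rfl | rfl
    · rw [Sf_one]; norm_num
    · norm_num [Sf]
  -- case |t| < 1
  have key : ∀ u ∈ Set.Ioo |t| 1, u^2 * Sf t ≤ t^2 * Sf u := by
    intro u hu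
    have hu1 : |u| < 1 := by
      rw [abs_of_nonneg (le_trans (abs_nonneg t) hu.1.le)]; exact hu.2
    refine hasSum_le ?_ ((Sf_hasSum h1).mul_left (u^2)) ((Sf_hasSum hu1).mul_left (t^2))
    intro k
    have hc : (0:ℝ) < (2*(k:ℝ)+1)*((k:ℝ)+1) := by positivity
    rw [div_eq_mul_inv, div_eq_mul_inv, ← mul_assoc, ← mul_assoc]
    have : u^2 * t^(2*k+2) ≤ t^2 * u^(2*k+2) := by
      have h2 : t^(2*k+2) = t^2 * (t^2)^k := by rw [← pow_mul, ← pow_add]; ring_nf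
      have h3 : u^(2*k+2) = u^2 * (u^2)^k := by rw [← pow_mul, ← pow_add]; ring_nf
      rw [h2, h3]
      have : (t^2)^k ≤ (u^2)^k := by
        apply pow_le_pow_left₀ (sq_nonneg t)
        rw [← sq_abs t, ← sq_abs u]
        exact pow_le_pow_left₀ (abs_nonneg t) (hu.1.le.trans (le_abs_self u)) 2
      calc u^2 * (t^2 * (t^2)^k) = (t^2 * u^2) * (t^2)^k := by ring
        _ ≤ (t^2 * u^2) * (u^2)^k := by
            apply mul_le_mul_of_nonneg_left this (by positivity)
        _ = t^2 * (u^2 * (u^2)^k) := by ring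
    exact mul_le_mul_of_nonneg_right this (by positivity)
  have hne : (𝓝[<] (1:ℝ)).NeBot := nhdsLT_neBot 1
  have hev : ∀ᶠ u in 𝓝[<] (1:ℝ), u^2 * Sf t ≤ t^2 * Sf u := by
    filter_upwards [Ioo_mem_nhdsLT_of_mem ⟨h1, le_refl 1⟩] with u hu
    exact key u hu
  have hl : Tendsto (fun u : ℝ => u^2 * Sf t) (𝓝[<] 1) (𝓝 (Sf t)) := by
    have : Tendsto (fun u : ℝ => u^2 * Sf t) (𝓝 1) (𝓝 (1^2 * Sf t)) :=
      ((continuous_pow 2).tendsto 1).mul_const _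
    simpa using this.mono_left nhdsWithin_le_nhds
  have hr : Tendsto (fun u : ℝ => t^2 * Sf u) (𝓝[<] 1) (𝓝 (t^2 * (2 * Real.log 2))) := by
    have : Tendsto (fun u : ℝ => t^2 * Sf u) (𝓝 1) (𝓝 (t^2 * Sf 1)) := by
      exact (Sf_cont.tendsto 1).const_mul _
    rw [Sf_one] at this
    exact this.mono_left nhdsWithin_le_nhds
  have := le_of_tendsto_of_tendsto hl hr hev
  linarith

lemma Sf_lt {t : ℝ} (h0 : t ≠ 0) (h : |t| < 1) : Sf t < 2 * Real.log 2 * t^2 := by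
  set u : ℝ := (|t|+1)/2 with hu
  have h0' : 0 < |t| := abs_pos.mpr h0
  have hu1 : |t| < u := by rw [hu]; linarith
  have hu2 : u < 1 := by rw [hu]; linarith
  have hupos : 0 < u := by positivity
  have huabs : |u| < 1 := by rw [abs_of_pos hupos]; exact hu2
  have key : u^2 * Sf t < t^2 * Sf u := by
    refine hasSum_lt (i := 1) ?_ ?_ ((Sf_hasSum h).mul_left (u^2)) ((Sf_hasSum huabs).mul_left (t^2))
    · intro k
      have hc : (0:ℝ) < (2*(k:ℝ)+1)*((k:ℝ)+1) := by positivity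
      dsimp only
      rw [div_eq_mul_inv, div_eq_mul_inv, ← mul_assoc, ← mul_assoc]
      refine mul_le_mul_of_nonneg_right ?_ (by positivity)
      have h2 : t^(2*k+2) = t^2 * (t^2)^k := by rw [← pow_mul, ← pow_add]; ring_nf
      have h3 : u^(2*k+2) = u^2 * (u^2)^k := by rw [← pow_mul, ← pow_add]; ring_nf
      rw [h2, h3]
      have hle : (t^2)^k ≤ (u^2)^k := by
        apply pow_le_pow_left₀ (sq_nonneg t)
        rw [← sq_abs t, ← sq_abs u]
        exact pow_le_pow_left₀ (abs_nonneg t) (le_of_lt (lt_of_lt_of_le hu1 (le_abs_self u))) 2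
      calc u^2 * (t^2 * (t^2)^k) = (t^2 * u^2) * (t^2)^k := by ring
        _ ≤ (t^2 * u^2) * (u^2)^k := mul_le_mul_of_nonneg_left hle (by positivity)
        _ = t^2 * (u^2 * (u^2)^k) := by ring
    · show u^2 * (t^(2*1+2)/((2*(1:ℕ)+1)*((1:ℕ)+1))) < t^2 * (u^(2*1+2)/((2*(1:ℕ)+1)*((1:ℕ)+1)))
      have ht4 : t^(2*1+2) = (t^2)^2 := by ring
      have hu4 : u^(2*1+2) = (u^2)^2 := by ring
      rw [ht4, hu4]
      have htu : t^2 < u^2 := by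
        rw [← sq_abs t, ← sq_abs u, abs_of_pos hupos]
        nlinarith
      have ht2pos : 0 < t^2 := by positivity
      push_cast
      rw [div_eq_mul_inv, div_eq_mul_inv, ← mul_assoc, ← mul_assoc]
      refine mul_lt_mul_of_pos_right ?_ (by norm_num)
      nlinarith [mul_pos (mul_pos (sub_pos.mpr htu) ht2pos) (show (0:ℝ) < u^2 by positivity)]
  have h2 := Sf_le (le_of_lt huabs)
  have : u^2 * Sf t < t^2 * (2 * Real.log 2 * u^2) :=
    lt_of_lt_of_le key (mul_le_mul_of_nonneg_left h2 (sq_nonneg t))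
  have hu2pos : 0 < u^2 := by positivity
  nlinarith

lemma binEnt_formula (t : ℝ) : binEnt ((1+t)/2) = 1 - Sf t / (2 * Real.log 2) := by
  have hl := log2_pos
  have key : ∀ v : ℝ, ent2 (v/2) = v/2 - v * Real.log v / (2 * Real.log 2) := by
    intro v
    rcases eq_or_ne v 0 with rfl | hv
    · simp [ent2]
    · simp only [ent2, Real.logb, Real.log_div hv (by norm_num : (2:ℝ) ≠ 0)]
      field_simp
      ring
  rw [binEnt, show (1:ℝ) - (1+t)/2 = (1-t)/2 by ring, key (1+t), key (1-t), Sf]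
  field_simp
  ring

lemma binEnt_ge {t : ℝ} (h : |t| ≤ 1) : 1 - t^2 ≤ binEnt ((1+t)/2) := by
  have hl := log2_pos
  rw [binEnt_formula]
  have h2 := Sf_le h
  have : Sf t / (2 * Real.log 2) ≤ t^2 := by
    rw [div_le_iff₀ (by linarith : (0:ℝ) < 2 * Real.log 2)]
    linarith
  linarith

lemma binEnt_gt {t : ℝ} (h0 : t ≠ 0) (h : |t| < 1) : 1 - t^2 < binEnt ((1+t)/2) := by
  have hl := log2_pos
  rw [binEnt_formula]
  have h2 := Sf_lt h0 h
  have : Sf t / (2 * Real.log 2) < t^2 := by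
    rw [div_lt_iff₀ (by linarith : (0:ℝ) < 2 * Real.log 2)]
    linarith [h2]
  linarith


lemma pk_outer (ψ : Fin 2 → ℂ) :
    (pk (outer ψ) 0 = ((ψ 0).re^2+(ψ 0).im^2+(ψ 1).re^2+(ψ 1).im^2
        + 2*((ψ 0).re*(ψ 1).re + (ψ 0).im*(ψ 1).im))/4) ∧
    (pk (outer ψ) 1 = ((ψ 0).re^2+(ψ 0).im^2+(ψ 1).re^2+(ψ 1).im^2
        + 2*((ψ 0).re*(ψ 1).im - (ψ 0).im*(ψ 1).re))/4) ∧
    (pk (outer ψ) 2 = ((ψ 0).re^2+(ψ 0).im^2+(ψ 1).re^2+(ψ 1).im^2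
        - 2*((ψ 0).re*(ψ 1).re + (ψ 0).im*(ψ 1).im))/4) ∧
    (pk (outer ψ) 3 = ((ψ 0).re^2+(ψ 0).im^2+(ψ 1).re^2+(ψ 1).im^2
        - 2*((ψ 0).re*(ψ 1).im - (ψ 0).im*(ψ 1).re))/4) := by
  have hs : Real.sqrt 2 * Real.sqrt 2 = 2 := Real.mul_self_sqrt (by norm_num)
  have hs' : (Real.sqrt 2 : ℝ) ≠ 0 := by positivity
  have hs2 : (Real.sqrt 2:ℝ)^2 = 2 := by rw [sq]; exact hs
  refine ⟨?_, ?_, ?_, ?_⟩ <;>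
  · simp [pk, outer, phiv, dotProduct, Matrix.mulVec, Matrix.vecMulVec_apply,
      Fin.sum_univ_two, Complex.ext_iff, Complex.add_re, Complex.mul_re, Complex.mul_im,
      Complex.div_re, Complex.div_im, Complex.normSq, pow_succ, Complex.I_mul_I,
      show ((0:Fin 4):ℕ) = 0 from rfl, show ((1:Fin 4):ℕ) = 1 from rfl,
      show ((2:Fin 4):ℕ) = 2 from rfl, show ((3:Fin 4):ℕ) = 3 from rfl]
    field_simp
    ring_nf
    simp [hs2]
    ring

lemma outer_phiv (m : Fin 4) : outer (phiv m) =
    !![1/2, (starRingEnd ℂ) (Complex.I ^ (m:ℕ)) / 2; Complex.I ^ (m:ℕ) / 2, 1/2] := by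
  have hs : Real.sqrt 2 * Real.sqrt 2 = 2 := Real.mul_self_sqrt (by norm_num)
  have hc2 : (Real.sqrt 2 : ℂ) * (Real.sqrt 2 : ℂ) = 2 := by
    rw [← Complex.ofReal_mul, hs]; norm_num
  have hsq : (Real.sqrt 2 : ℂ)^2 = 2 := by rw [sq]; exact hc2
  fin_cases m <;> ext i j <;> fin_cases i <;> fin_cases j <;>
    simp [outer, vecMulVec_apply, phiv, map_div₀, Complex.conj_ofReal, div_mul_div_comm,
      pow_succ, Complex.I_mul_I, Complex.conj_I, hc2,
      show ((0:Fin 4):ℕ) = 0 from rfl, show ((1:Fin 4):ℕ) = 1 from rfl,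
      show ((2:Fin 4):ℕ) = 2 from rfl, show ((3:Fin 4):ℕ) = 3 from rfl] <;>
    ring_nf <;>
    norm_num [Complex.ext_iff, hc2, hsq]

theorem stmt12 (ψ : Fin 2 → ℂ) (hψ : star ψ ⬝ᵥ ψ = 1) :
    3 / 2 ≤ H4 (outer ψ) ∧
      (H4 (outer ψ) = 3 / 2 ↔ ∃ m : Fin 4, outer ψ = outer (phiv m)) := by
  obtain ⟨q0, q1, q2, q3⟩ := pk_outer ψ
  have hn : (ψ 0).re^2+(ψ 0).im^2+(ψ 1).re^2+(ψ 1).im^2 = 1 := by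
    have h := congrArg Complex.re hψ
    simp [dotProduct, Fin.sum_univ_two, Complex.add_re, Complex.mul_re, Complex.mul_im] at h
    nlinarith [h]
  set A := (ψ 0).re with hA
  set B := (ψ 0).im with hB
  set C := (ψ 1).re with hC
  set D := (ψ 1).im with hD
  rw [hn] at q0 q1 q2 q3
  set x := A*C + B*D with hx
  set y := A*D - B*C with hy
  have hprod : x^2 + y^2 = (A^2+B^2)*(C^2+D^2) := by rw [hx, hy]; ring
  have hxy : x^2 + y^2 ≤ 1/4 := by nlinarith [sq_nonneg (A^2+B^2-(C^2+D^2))]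
  have hH : H4 (outer ψ) = 1 + (binEnt ((1+2*x)/2) + binEnt ((1+2*y)/2))/2 := by
    rw [H4, Fin.sum_univ_four, q0, q1, q2, q3]
    have p1 := pair_sum (2*x)
    have p2 := pair_sum (2*y)
    have e0 : 1 + 2*(A*C+B*D) = 1 + 2*x := by rw [hx]
    have e1 : (1:ℝ) + 2*(A*D-B*C) = 1 + 2*y := by rw [hy]
    have e2 : (1:ℝ) - 2*(A*C+B*D) = 1 - 2*x := by rw [hx]
    have e3 : (1:ℝ) - 2*(A*D-B*C) = 1 - 2*y := by rw [hy]
    rw [e0, e1, e2, e3]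
    linarith
  have habsx : |2*x| ≤ 1 := by rw [abs_le]; constructor <;> nlinarith [sq_nonneg y]
  have habsy : |2*y| ≤ 1 := by rw [abs_le]; constructor <;> nlinarith [sq_nonneg x]
  have hgx : 1 - (2*x)^2 ≤ binEnt ((1+2*x)/2) := binEnt_ge habsx
  have hgy : 1 - (2*y)^2 ≤ binEnt ((1+2*y)/2) := binEnt_ge habsy
  refine ⟨by rw [hH]; nlinarith, ?_, ?_⟩
  · intro heq
    rw [hH] at heq
    have ex : 2*x = 0 ∨ 2*x = 1 ∨ 2*x = -1 := by
      by_contra hcon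
      push_neg at hcon
      obtain ⟨c1, c2, c3⟩ := hcon
      have hlt : |2*x| < 1 := lt_of_le_of_ne habsx (fun habs => by
        rcases (abs_eq (by norm_num : (0:ℝ) ≤ 1)).mp habs with h | h
        exacts [c2 h, c3 h])
      have := binEnt_gt c1 hlt
      nlinarith
    have ey : 2*y = 0 ∨ 2*y = 1 ∨ 2*y = -1 := by
      by_contra hcon
      push_neg at hcon
      obtain ⟨c1, c2, c3⟩ := hcon
      have hlt : |2*y| < 1 := lt_of_le_of_ne habsy (fun habs => by
        rcases (abs_eq (by norm_num : (0:ℝ) ≤ 1)).mp habs with h | h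
        exacts [c2 h, c3 h])
      have := binEnt_gt c1 hlt
      nlinarith
    have h1 : (1-(2*x)^2) + (1-(2*y)^2) ≤ 1 := by linarith [hgx, hgy, heq]
    clear heq hgx hgy hH q0 q1 q2 q3 hψ
    have h1' : x^2 + y^2 ≥ 1/4 := by nlinarith [h1]
    have hsum : x^2 + y^2 = 1/4 := le_antisymm hxy h1'
    clear h1 h1'
    have hAB : A^2+B^2 = 1/2 := by nlinarith [sq_nonneg (A^2+B^2-(C^2+D^2))]
    have hCD : C^2+D^2 = 1/2 := by nlinarith [sq_nonneg (A^2+B^2-(C^2+D^2))]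
    have hxv : x = A*C + B*D := hx
    have hyv : y = A*D - B*C := hy
    rcases ex with ex | ex | ex <;> rcases ey with ey | ey | ey <;>
      [ (exfalso; have hx0 : x = 0 := by linarith
         have hy0 : y = 0 := by linarith
         rw [hx0, hy0] at hsum; norm_num at hsum);
        skip; skip; skip;
        (exfalso; have hx0 : x = 1/2 := by linarith
         have hy0 : y = 1/2 := by linarith
         rw [hx0, hy0] at hsum; norm_num at hsum);
        (exfalso; have hx0 : x = 1/2 := by linarith
         have hy0 : y = -(1/2) := by linarith
         rw [hx0, hy0] at hsum; norm_num at hsum);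
        skip;
        (exfalso; have hx0 : x = -(1/2) := by linarith
         have hy0 : y = 1/2 := by linarith
         rw [hx0, hy0] at hsum; norm_num at hsum);
        (exfalso; have hx0 : x = -(1/2) := by linarith
         have hy0 : y = -(1/2) := by linarith
         rw [hx0, hy0] at hsum; norm_num at hsum) ]
    -- x=0, y=1/2 : m = 1
    · refine ⟨1, ?_⟩
      rw [outer_phiv]
      ext i j
      fin_cases i <;> fin_cases j <;>
        simp [outer, vecMulVec_apply, Complex.ext_iff, Complex.mul_re, Complex.mul_im,
          Complex.conj_I, pow_one, show ((1:Fin 4):ℕ) = 1 from rfl] <;>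
        constructor <;> linarith [ex, ey, hAB, hCD, hxv, hyv]
    · refine ⟨3, ?_⟩
      rw [outer_phiv]
      ext i j
      fin_cases i <;> fin_cases j <;>
        simp [outer, vecMulVec_apply, Complex.ext_iff, Complex.mul_re, Complex.mul_im,
          Complex.conj_I, pow_succ, Complex.I_mul_I, show ((3:Fin 4):ℕ) = 3 from rfl] <;>
        constructor <;> linarith [ex, ey, hAB, hCD, hxv, hyv]
    · refine ⟨0, ?_⟩
      rw [outer_phiv]
      ext i j
      fin_cases i <;> fin_cases j <;>
        simp [outer, vecMulVec_apply, Complex.ext_iff, Complex.mul_re, Complex.mul_im,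
          show ((0:Fin 4):ℕ) = 0 from rfl] <;>
        constructor <;> linarith [ex, ey, hAB, hCD, hxv, hyv]
    · refine ⟨2, ?_⟩
      rw [outer_phiv]
      ext i j
      fin_cases i <;> fin_cases j <;>
        simp [outer, vecMulVec_apply, Complex.ext_iff, Complex.mul_re, Complex.mul_im,
          pow_succ, Complex.I_mul_I, show ((2:Fin 4):ℕ) = 2 from rfl] <;>
        constructor <;> linarith [ex, ey, hAB, hCD, hxv, hyv]
  · rintro ⟨m, hm⟩
    clear q0 q1 q2 q3 hψ hn hprod hxy hH habsx habsy hgx hgy hx hy hA hB hC hD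
    rw [hm]
    obtain ⟨r0, r1, r2, r3⟩ := pk_outer (phiv m)
    rw [H4, Fin.sum_univ_four, r0, r1, r2, r3]
    have hs : Real.sqrt 2 * Real.sqrt 2 = 2 := Real.mul_self_sqrt (by norm_num)
    have h12 : Real.sqrt 2/2 * (Real.sqrt 2/2) = 1/2 := by nlinarith [hs]
    fin_cases m <;>
      simp [phiv, Complex.div_re, Complex.div_im, Complex.normSq_apply, pow_succ,
        Complex.I_mul_I, show ((0:Fin 4):ℕ) = 0 from rfl, show ((1:Fin 4):ℕ) = 1 from rfl,
        show ((2:Fin 4):ℕ) = 2 from rfl, show ((3:Fin 4):ℕ) = 3 from rfl] <;>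
      ring_nf <;>
      norm_num [show Real.sqrt 2^2 = 2 from Real.sq_sqrt (by norm_num), ent2_zero,
        ent2_one_half, ent2_one_quarter]
end
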